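/- Let d > 1 and let P_1(z) = Σ_{i=1}^d c_i z_i be a nonzero linear polynomial on ℂ^d. Then for each m > 1 there exists a nonzero homogeneous polynomial f_m of degree m with P_1(D) f_m = 0, and for such f_m one has ‖P_1 f_m‖_a^2 = ‖P_1‖_a^2 ‖f_m‖_a^2. Hence P_1 does not satisfy the Khavinson–Shapiro bounds ‖P_1 f_m‖_a ≥ C m^{1/2} ‖f_m‖_a with C > 0 independent of m. -/

import Mathlib

open MvPolynomial Finset

/-- Multi-index factorial `α! = α₁! ⋯ α_d!`. -/
def mfact {d : ℕ} (α : Fin d →₀ ℕ) : ℕ := ∏ i, (α i).factorial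

/-- The apolar (Fischer/Bombieri) inner product `⟨P,Q⟩_a = Σ_α α! c_α conj(d_α)`. -/
noncomputable def apolar {d : ℕ} (P Q : MvPolynomial (Fin d) ℂ) : ℂ :=
  ∑ α ∈ P.support ∪ Q.support, (mfact α : ℂ) * P.coeff α * (starRingEnd ℂ) (Q.coeff α)

/-- The squared apolar norm. -/
noncomputable def apolarNormSq {d : ℕ} (P : MvPolynomial (Fin d) ℂ) : ℝ :=
  ∑ α ∈ P.support, (mfact α : ℝ) * ‖P.coeff α‖ ^ 2

/-- The apolar norm. -/
noncomputable def apolarNorm {d : ℕ} (P : MvPolynomial (Fin d) ℂ) : ℝ :=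
  Real.sqrt (apolarNormSq P)

/-- The mixed partial derivative `D^α = ∂^{α₁}_1 ⋯ ∂^{α_d}_d` as a linear endomorphism. -/
noncomputable def Dmulti {d : ℕ} (α : Fin d →₀ ℕ) :
    Module.End ℂ (MvPolynomial (Fin d) ℂ) :=
  (List.ofFn fun i : Fin d =>
    ((MvPolynomial.pderiv i).toLinearMap : Module.End ℂ (MvPolynomial (Fin d) ℂ)) ^ α i).prod

/-- The differential operator `Q*(D)`: conjugate the coefficients of `Q` and replace
each variable by the corresponding partial derivative. -/
noncomputable def Dop {d : ℕ} (Q : MvPolynomial (Fin d) ℂ) :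
    Module.End ℂ (MvPolynomial (Fin d) ℂ) :=
  ∑ α ∈ Q.support, (starRingEnd ℂ) (Q.coeff α) • Dmulti α


variable {d : ℕ}

lemma apolar_eq_sum {P Q : MvPolynomial (Fin d) ℂ} {s : Finset (Fin d →₀ ℕ)}
    (hP : P.support ⊆ s) (hQ : Q.support ⊆ s) :
    apolar P Q = ∑ α ∈ s, (mfact α : ℂ) * P.coeff α * (starRingEnd ℂ) (Q.coeff α) := by
  apply Finset.sum_subset (Finset.union_subset hP hQ)
  intro α _ hα
  rw [Finset.mem_union, not_or] at hα
  rw [MvPolynomial.notMem_support_iff.mp hα.1]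
  ring

lemma mfact_pos (α : Fin d →₀ ℕ) : 0 < mfact α :=
  Finset.prod_pos fun i _ => Nat.factorial_pos _

lemma mfact_add_single (α : Fin d →₀ ℕ) (i : Fin d) :
    mfact (α + Finsupp.single i 1) = mfact α * (α i + 1) := by
  unfold mfact
  rw [Finset.prod_eq_mul_prod_sdiff_singleton_of_mem (Finset.mem_univ i),
    Finset.prod_eq_mul_prod_sdiff_singleton_of_mem (Finset.mem_univ i) (fun j => (α j).factorial)]
  have h1 : ∀ j ∈ Finset.univ \ {i}, ((α + Finsupp.single i 1 : Fin d →₀ ℕ) j).factorial = (α j).factorial := by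
    intro j hj
    rw [Finset.mem_sdiff, Finset.mem_singleton] at hj
    simp [Finsupp.single_apply, Ne.symm hj.2]
  rw [Finset.prod_congr rfl h1]
  have h2 : (α + Finsupp.single i 1 : Fin d →₀ ℕ) i = α i + 1 := by simp
  rw [h2, Nat.factorial_succ]
  ring

lemma apolar_zero_left (Q : MvPolynomial (Fin d) ℂ) : apolar 0 Q = 0 := by
  simp [apolar]

lemma apolar_add_left (P P' Q : MvPolynomial (Fin d) ℂ) :
    apolar (P + P') Q = apolar P Q + apolar P' Q := by
  classical
  set s := P.support ∪ P'.support ∪ Q.support with hs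
  have hP : P.support ⊆ s := Finset.subset_union_left.trans Finset.subset_union_left
  have hP' : P'.support ⊆ s := Finset.subset_union_right.trans Finset.subset_union_left
  have hQ : Q.support ⊆ s := Finset.subset_union_right
  rw [apolar_eq_sum (P := P + P') (s := s)
      ((MvPolynomial.support_add).trans Finset.subset_union_left) hQ,
    apolar_eq_sum (P := P) (s := s) hP hQ,
    apolar_eq_sum (P := P') (s := s) hP' hQ,
    ← Finset.sum_add_distrib]
  apply Finset.sum_congr rfl
  intro α _
  rw [MvPolynomial.coeff_add]
  ring

lemma apolar_smul_left (a : ℂ) (P Q : MvPolynomial (Fin d) ℂ) :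
    apolar (a • P) Q = a * apolar P Q := by
  rw [apolar_eq_sum (P := a • P) (s := P.support ∪ Q.support)
      ((MvPolynomial.support_smul).trans Finset.subset_union_left) Finset.subset_union_right,
    apolar, Finset.mul_sum]
  apply Finset.sum_congr rfl
  intro α _
  rw [MvPolynomial.coeff_smul]
  simp only [smul_eq_mul]
  ring

lemma apolar_smul_right (a : ℂ) (P Q : MvPolynomial (Fin d) ℂ) :
    apolar P (a • Q) = (starRingEnd ℂ) a * apolar P Q := by
  rw [apolar_eq_sum (Q := a • Q) (s := P.support ∪ Q.support)
      Finset.subset_union_left ((MvPolynomial.support_smul).trans Finset.subset_union_right),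
    apolar, Finset.mul_sum]
  apply Finset.sum_congr rfl
  intro α _
  rw [MvPolynomial.coeff_smul]
  simp only [smul_eq_mul, map_mul]
  ring

lemma apolar_sum_left {ι : Type*} (t : Finset ι) (P : ι → MvPolynomial (Fin d) ℂ)
    (Q : MvPolynomial (Fin d) ℂ) :
    apolar (∑ i ∈ t, P i) Q = ∑ i ∈ t, apolar (P i) Q := by
  classical
  induction t using Finset.induction_on with
  | empty => simp [apolar_zero_left]
  | insert _ _ h ih => rw [Finset.sum_insert h, Finset.sum_insert h, apolar_add_left, ih]

lemma apolar_zero_right (P : MvPolynomial (Fin d) ℂ) : apolar P 0 = 0 := by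
  simp [apolar]

lemma apolar_add_right (P Q Q' : MvPolynomial (Fin d) ℂ) :
    apolar P (Q + Q') = apolar P Q + apolar P Q' := by
  classical
  set s := P.support ∪ Q.support ∪ Q'.support with hs
  have hP : P.support ⊆ s := Finset.subset_union_left.trans Finset.subset_union_left
  have hQ : Q.support ⊆ s := Finset.subset_union_right.trans Finset.subset_union_left
  have hQ' : Q'.support ⊆ s := Finset.subset_union_right
  rw [apolar_eq_sum (Q := Q + Q') (s := s) hP
      ((MvPolynomial.support_add).trans (Finset.union_subset hQ hQ')),
    apolar_eq_sum (Q := Q) (s := s) hP hQ,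
    apolar_eq_sum (Q := Q') (s := s) hP hQ',
    ← Finset.sum_add_distrib]
  apply Finset.sum_congr rfl
  intro α _
  rw [MvPolynomial.coeff_add, map_add]
  ring

lemma apolar_sum_right {ι : Type*} (t : Finset ι) (P : MvPolynomial (Fin d) ℂ)
    (Q : ι → MvPolynomial (Fin d) ℂ) :
    apolar P (∑ i ∈ t, Q i) = ∑ i ∈ t, apolar P (Q i) := by
  classical
  induction t using Finset.induction_on with
  | empty => simp [apolar_zero_right]
  | insert _ _ h ih => rw [Finset.sum_insert h, Finset.sum_insert h, apolar_add_right, ih]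

lemma coeff_pderiv (i : Fin d) (Q : MvPolynomial (Fin d) ℂ) (β : Fin d →₀ ℕ) :
    MvPolynomial.coeff β (MvPolynomial.pderiv i Q)
      = ((β i : ℂ) + 1) * MvPolynomial.coeff (β + Finsupp.single i 1) Q := by
  classical
  induction Q using MvPolynomial.induction_on' with
  | monomial s a =>
    rw [MvPolynomial.pderiv_monomial, MvPolynomial.coeff_monomial, MvPolynomial.coeff_monomial]
    by_cases h : s = β + Finsupp.single i 1
    · have hsi : s i = β i + 1 := by simp [h]
      have : s - Finsupp.single i 1 = β := by
        rw [h, add_tsub_cancel_right]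
      rw [if_pos h, if_pos this, hsi]
      push_cast; ring
    · rw [if_neg h]
      by_cases h2 : s - Finsupp.single i 1 = β
      · have hsi : s i = 0 := by
          by_contra hne
          apply h
          have hle : Finsupp.single i 1 ≤ s := by rw [Finsupp.single_le_iff]; omega
          rw [← h2, tsub_add_cancel_of_le hle]
        rw [if_pos h2, hsi]
        simp
      · rw [if_neg h2]; ring
  | add p q hp hq =>
    rw [map_add, MvPolynomial.coeff_add, MvPolynomial.coeff_add, hp, hq]
    ring

lemma apolar_X_mul (i : Fin d) (P Q : MvPolynomial (Fin d) ℂ) :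
    apolar (X i * P) Q = apolar P (MvPolynomial.pderiv i Q) := by
  classical
  set e : Fin d →₀ ℕ := Finsupp.single i 1 with he
  set t := P.support ∪ (MvPolynomial.pderiv i Q).support with ht
  set B := Q.support.filter (fun α => α i = 0) with hB
  set s := t.image (· + e) ∪ B with hs
  have himg : ∀ α ∈ t.image (· + e), α i ≠ 0 := by
    intro α hα
    obtain ⟨β, _, rfl⟩ := Finset.mem_image.mp hα
    simp [he]
  have h1 : (X i * P).support ⊆ s := by
    intro α hα
    rw [MvPolynomial.mem_support_iff, MvPolynomial.coeff_X_mul'] at hα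
    by_cases hmem : i ∈ α.support
    · rw [if_pos hmem] at hα
      apply Finset.mem_union_left
      apply Finset.mem_image.mpr
      refine ⟨α - e, Finset.mem_union_left _ (MvPolynomial.mem_support_iff.mpr hα), ?_⟩
      rw [Finsupp.mem_support_iff] at hmem
      apply tsub_add_cancel_of_le
      rwa [he, Finsupp.single_le_iff, Nat.one_le_iff_ne_zero]
    · rw [if_neg hmem] at hα; exact absurd rfl hα
  have h2 : Q.support ⊆ s := by
    intro α hα
    by_cases hz : α i = 0
    · exact Finset.mem_union_right _ (Finset.mem_filter.mpr ⟨hα, hz⟩)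
    · apply Finset.mem_union_left
      apply Finset.mem_image.mpr
      have hle : e ≤ α := by rw [he, Finsupp.single_le_iff]; omega
      refine ⟨α - e, ?_, tsub_add_cancel_of_le hle⟩
      apply Finset.mem_union_right
      rw [MvPolynomial.mem_support_iff, coeff_pderiv, tsub_add_cancel_of_le hle]
      have hβi : (α - e) i = α i - 1 := by simp [he]
      rw [hβi]
      have : ((α i - 1 : ℕ) : ℂ) + 1 ≠ 0 := by
        have := Nat.cast_add_one_ne_zero (R := ℂ) (α i - 1)
        exact_mod_cast this
      exact mul_ne_zero this (MvPolynomial.mem_support_iff.mp hα)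
  rw [apolar_eq_sum h1 h2,
    apolar_eq_sum (P := P) (Q := MvPolynomial.pderiv i Q) (s := t)
      Finset.subset_union_left Finset.subset_union_right, hs]
  have hdisj : Disjoint (t.image (· + e)) B := by
    rw [Finset.disjoint_left]
    intro α hα hαB
    exact himg α hα (Finset.mem_filter.mp hαB).2
  rw [Finset.sum_union hdisj]
  have hBzero : ∑ α ∈ B, (mfact α : ℂ) * (X i * P).coeff α * (starRingEnd ℂ) (Q.coeff α) = 0 := by
    apply Finset.sum_eq_zero
    intro α hα
    have hz := (Finset.mem_filter.mp hα).2
    rw [MvPolynomial.coeff_X_mul', if_neg (by simp [hz])]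
    ring
  rw [hBzero, add_zero]
  rw [Finset.sum_image (fun a _ b _ h => by simpa using add_left_injective e h)]
  apply Finset.sum_congr rfl
  intro β _
  have hc1 : (X i * P).coeff (β + e) = P.coeff β := by
    rw [add_comm, he, MvPolynomial.coeff_X_mul]
  rw [hc1, coeff_pderiv, ← he, mfact_add_single, map_mul]
  have : (starRingEnd ℂ) ((β i : ℂ) + 1) = ((β i : ℂ) + 1) := by
    simp
  rw [this]
  push_cast
  ring

lemma apolar_self (P : MvPolynomial (Fin d) ℂ) : apolar P P = (apolarNormSq P : ℂ) := by
  unfold apolar apolarNormSq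
  rw [Finset.union_self, Complex.ofReal_sum]
  apply Finset.sum_congr rfl
  intro α _
  rw [mul_assoc, Complex.mul_conj]
  push_cast [Complex.sq_norm]
  ring

lemma apolar_one : apolar (1 : MvPolynomial (Fin d) ℂ) 1 = 1 := by
  unfold apolar
  rw [Finset.union_self]
  have hsupp : (1 : MvPolynomial (Fin d) ℂ).support = {0} := by
    classical
    rw [show (1 : MvPolynomial (Fin d) ℂ) = MvPolynomial.monomial 0 1 from rfl,
      MvPolynomial.support_monomial, if_neg one_ne_zero]
  rw [hsupp, Finset.sum_singleton]
  simp [mfact]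

lemma reznick_key (c : Fin d → ℂ) (f : MvPolynomial (Fin d) ℂ)
    (hf : (∑ i, (starRingEnd ℂ) (c i) • MvPolynomial.pderiv i f) = 0) :
    apolar ((∑ i, C (c i) * X i) * f) ((∑ i, C (c i) * X i) * f)
      = (∑ i, (starRingEnd ℂ) (c i) * c i) * apolar f f := by
  set P1 : MvPolynomial (Fin d) ℂ := ∑ i, C (c i) * X i with hP1
  set g := P1 * f with hg
  have hsplit : P1 * f = ∑ i, c i • (X i * f) := by
    rw [hP1, Finset.sum_mul]
    apply Finset.sum_congr rfl
    intro i _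
    rw [MvPolynomial.smul_eq_C_mul, mul_assoc]
  have hderP1 : ∀ i : Fin d, MvPolynomial.pderiv i P1 = C (c i) := by
    intro i
    rw [hP1, map_sum]
    rw [Finset.sum_eq_single i]
    · rw [MvPolynomial.pderiv_C_mul, MvPolynomial.pderiv_X_self, mul_one]
    · intro j _ hj
      rw [MvPolynomial.pderiv_C_mul, MvPolynomial.pderiv_X_of_ne hj, mul_zero]
    · intro h; exact absurd (Finset.mem_univ i) h
  have hderg : ∀ i : Fin d, MvPolynomial.pderiv i g = C (c i) * f + P1 * MvPolynomial.pderiv i f := by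
    intro i
    rw [hg, MvPolynomial.pderiv_mul, hderP1]
  have hsum : (∑ i, (starRingEnd ℂ) (c i) • MvPolynomial.pderiv i g)
      = (∑ i, (starRingEnd ℂ) (c i) * c i) • f := by
    calc (∑ i, (starRingEnd ℂ) (c i) • MvPolynomial.pderiv i g)
        = ∑ i, (((starRingEnd ℂ) (c i) * c i) • f
            + P1 * ((starRingEnd ℂ) (c i) • MvPolynomial.pderiv i f)) := by
          apply Finset.sum_congr rfl
          intro i _
          rw [hderg i, smul_add, ← MvPolynomial.smul_eq_C_mul, smul_smul, mul_smul_comm]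
      _ = (∑ i, (starRingEnd ℂ) (c i) * c i) • f
            + P1 * (∑ i, (starRingEnd ℂ) (c i) • MvPolynomial.pderiv i f) := by
          rw [Finset.sum_add_distrib, Finset.sum_smul, Finset.mul_sum]
      _ = (∑ i, (starRingEnd ℂ) (c i) * c i) • f := by rw [hf, mul_zero, add_zero]
  have hreal : (starRingEnd ℂ) (∑ i, (starRingEnd ℂ) (c i) * c i)
      = ∑ i, (starRingEnd ℂ) (c i) * c i := by
    rw [map_sum]
    apply Finset.sum_congr rfl
    intro i _
    rw [map_mul, Complex.conj_conj, mul_comm]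
  calc apolar g g = apolar (∑ i, c i • (X i * f)) g := by rw [hg, hsplit]
    _ = ∑ i, c i * apolar (X i * f) g := by
        rw [apolar_sum_left]
        apply Finset.sum_congr rfl
        intro i _
        rw [apolar_smul_left]
    _ = ∑ i, c i * apolar f (MvPolynomial.pderiv i g) := by
        apply Finset.sum_congr rfl
        intro i _
        rw [apolar_X_mul]
    _ = apolar f (∑ i, (starRingEnd ℂ) (c i) • MvPolynomial.pderiv i g) := by
        rw [apolar_sum_right]
        apply Finset.sum_congr rfl
        intro i _
        rw [apolar_smul_right, Complex.conj_conj]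
    _ = (∑ i, (starRingEnd ℂ) (c i) * c i) * apolar f f := by
        rw [hsum, apolar_smul_right, hreal]

lemma apolarNormSq_nonneg (P : MvPolynomial (Fin d) ℂ) : 0 ≤ apolarNormSq P := by
  apply Finset.sum_nonneg
  intro α _
  positivity

lemma apolarNormSq_pos {P : MvPolynomial (Fin d) ℂ} (hP : P ≠ 0) : 0 < apolarNormSq P := by
  obtain ⟨α, hα⟩ := (MvPolynomial.support_nonempty.mpr hP)
  apply Finset.sum_pos'
  · intro β _; positivity
  · refine ⟨α, hα, ?_⟩
    have h1 : (0 : ℝ) < mfact α := by exact_mod_cast mfact_pos α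
    have h2 : (0 : ℝ) < ‖P.coeff α‖ ^ 2 := by
      exact pow_pos (norm_pos_iff.mpr (MvPolynomial.mem_support_iff.mp hα)) 2
    positivity

lemma normSq_mul_eq (c : Fin d → ℂ) (f : MvPolynomial (Fin d) ℂ)
    (hf : (∑ i, (starRingEnd ℂ) (c i) • MvPolynomial.pderiv i f) = 0) :
    apolarNormSq ((∑ i, C (c i) * X i) * f)
      = apolarNormSq (∑ i, C (c i) * X i) * apolarNormSq f := by
  have h1 : (∑ i, (starRingEnd ℂ) (c i) • MvPolynomial.pderiv i (1 : MvPolynomial (Fin d) ℂ)) = 0 := by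
    simp [MvPolynomial.pderiv_one]
  have hP1 := reznick_key c 1 h1
  rw [mul_one, apolar_one, mul_one, apolar_self] at hP1
  have h2 := reznick_key c f hf
  rw [apolar_self, apolar_self, ← hP1] at h2
  exact_mod_cast h2

lemma exists_harmonic (hd : 1 < d) (c : Fin d → ℂ) (hc : c ≠ 0) (m : ℕ) (hm : 0 < m) :
    ∃ f : MvPolynomial (Fin d) ℂ, f ≠ 0 ∧ f.IsHomogeneous m ∧
      (∑ i, (starRingEnd ℂ) (c i) • MvPolynomial.pderiv i f) = 0 := by
  classical
  obtain ⟨i, hi⟩ := Function.ne_iff.mp hc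
  have h0 : (0 : ℕ) < d := by omega
  have h1' : (1 : ℕ) < d := hd
  set i0 : Fin d := ⟨0, h0⟩
  set i1 : Fin d := ⟨1, h1'⟩
  have hi01 : i0 ≠ i1 := by simp [i0, i1, Fin.ext_iff]
  set j : Fin d := if i = i0 then i1 else i0 with hj
  have hij : j ≠ i := by
    by_cases h : i = i0
    · rw [hj, if_pos h, h]; exact hi01.symm
    · rw [hj, if_neg h]; exact fun hh => h hh.symm
  set L : MvPolynomial (Fin d) ℂ :=
    C ((starRingEnd ℂ) (c j)) * X i - C ((starRingEnd ℂ) (c i)) * X j with hL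
  have hLne : L ≠ 0 := by
    intro h
    have : L.coeff (Finsupp.single j 1) = 0 := by rw [h]; simp
    rw [hL, MvPolynomial.coeff_sub, MvPolynomial.coeff_C_mul, MvPolynomial.coeff_C_mul,
      MvPolynomial.coeff_X', MvPolynomial.coeff_X',
      if_neg (fun hh : Finsupp.single i 1 = Finsupp.single j 1 =>
        hij ((Finsupp.single_left_inj one_ne_zero).mp hh).symm),
      if_pos rfl] at this
    simp only [mul_zero, mul_one, zero_sub, neg_eq_zero, map_eq_zero] at this
    exact hi this
  have hLhom : L.IsHomogeneous 1 := by
    have h1 : (C ((starRingEnd ℂ) (c j)) * X i : MvPolynomial (Fin d) ℂ).IsHomogeneous 1 := by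
      simpa using (MvPolynomial.isHomogeneous_C _ _).mul (MvPolynomial.isHomogeneous_X _ i)
    have h2 : (C ((starRingEnd ℂ) (c i)) * X j : MvPolynomial (Fin d) ℂ).IsHomogeneous 1 := by
      simpa using (MvPolynomial.isHomogeneous_C _ _).mul (MvPolynomial.isHomogeneous_X _ j)
    exact h1.sub h2
  refine ⟨L ^ m, pow_ne_zero m hLne, by simpa using hLhom.pow m, ?_⟩
  have hderL : (∑ k, (starRingEnd ℂ) (c k) • MvPolynomial.pderiv k L) = 0 := by
    have hder : ∀ k : Fin d, MvPolynomial.pderiv k L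
        = C ((starRingEnd ℂ) (c j)) * (if k = i then 1 else 0)
          - C ((starRingEnd ℂ) (c i)) * (if k = j then 1 else 0) := by
      intro k
      rw [hL, map_sub, MvPolynomial.pderiv_C_mul, MvPolynomial.pderiv_C_mul]
      congr 1
      · congr 1
        by_cases h : k = i
        · rw [if_pos h, h, MvPolynomial.pderiv_X_self]
        · rw [if_neg h, MvPolynomial.pderiv_X_of_ne (fun hh => h hh.symm)]
      · congr 1
        by_cases h : k = j
        · rw [if_pos h, h, MvPolynomial.pderiv_X_self]
        · rw [if_neg h, MvPolynomial.pderiv_X_of_ne (fun hh => h hh.symm)]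
    calc (∑ k, (starRingEnd ℂ) (c k) • MvPolynomial.pderiv k L)
        = ∑ k, ((starRingEnd ℂ) (c k) • (C ((starRingEnd ℂ) (c j)) * (if k = i then 1 else 0))
            - (starRingEnd ℂ) (c k) • (C ((starRingEnd ℂ) (c i)) * (if k = j then 1 else 0))) := by
          apply Finset.sum_congr rfl
          intro k _
          rw [hder k, smul_sub]
      _ = (starRingEnd ℂ) (c i) • (C ((starRingEnd ℂ) (c j)) * 1)
            - (starRingEnd ℂ) (c j) • (C ((starRingEnd ℂ) (c i)) * 1) := by
          rw [Finset.sum_sub_distrib]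
          congr 1
          · rw [Finset.sum_eq_single i]
            · rw [if_pos rfl]
            · intro k _ hk; rw [if_neg hk, mul_zero, smul_zero]
            · intro h; exact absurd (Finset.mem_univ i) h
          · rw [Finset.sum_eq_single j]
            · rw [if_pos rfl]
            · intro k _ hk; rw [if_neg hk, mul_zero, smul_zero]
            · intro h; exact absurd (Finset.mem_univ j) h
      _ = 0 := by
          rw [mul_one, mul_one, MvPolynomial.smul_eq_C_mul, MvPolynomial.smul_eq_C_mul,
            ← MvPolynomial.C_mul, ← MvPolynomial.C_mul, mul_comm ((starRingEnd ℂ) (c i)), sub_self]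
  have hpow : ∀ k : Fin d, MvPolynomial.pderiv k (L ^ m)
      = (m : MvPolynomial (Fin d) ℂ) * L ^ (m - 1) * MvPolynomial.pderiv k L :=
    fun k => MvPolynomial.pderiv_pow
  calc (∑ k, (starRingEnd ℂ) (c k) • MvPolynomial.pderiv k (L ^ m))
      = (m : MvPolynomial (Fin d) ℂ) * L ^ (m - 1)
          * (∑ k, (starRingEnd ℂ) (c k) • MvPolynomial.pderiv k L) := by
        rw [Finset.mul_sum]
        apply Finset.sum_congr rfl
        intro k _
        rw [hpow k, mul_smul_comm]
    _ = 0 := by rw [hderL, mul_zero]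

/-- For d > 1 and a nonzero linear polynomial P1, for each m > 1 there is a nonzero
homogeneous f_m of degree m annihilated by P1*(D), for all such f_m the Bombieri
inequality is an equality, and hence P1 does not satisfy the Khavinson-Shapiro bounds. -/
theorem stmt14 {d : ℕ} (hd : 1 < d) (c : Fin d → ℂ) (hc : c ≠ 0) :
    (∀ m : ℕ, 1 < m →
      (∃ f : MvPolynomial (Fin d) ℂ, f ≠ 0 ∧ f.IsHomogeneous m ∧
        (∑ i, (starRingEnd ℂ) (c i) • MvPolynomial.pderiv i f) = 0) ∧
      (∀ f : MvPolynomial (Fin d) ℂ, f.IsHomogeneous m →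
        (∑ i, (starRingEnd ℂ) (c i) • MvPolynomial.pderiv i f) = 0 →
        apolarNormSq ((∑ i, C (c i) * X i) * f)
          = apolarNormSq (∑ i, C (c i) * X i) * apolarNormSq f)) ∧
    ¬ ∃ K : ℝ, 0 < K ∧ ∀ m : ℕ, 1 ≤ m → ∀ f : MvPolynomial (Fin d) ℂ, f.IsHomogeneous m →
        K * Real.sqrt m * apolarNorm f ≤ apolarNorm ((∑ i, C (c i) * X i) * f) := by
  constructor
  · intro m hm
    exact ⟨exists_harmonic hd c hc m (by omega),
      fun f _ hf => normSq_mul_eq c f hf⟩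
  · rintro ⟨K, hK, hbd⟩
    set P1 : MvPolynomial (Fin d) ℂ := ∑ i, C (c i) * X i with hP1def
    set A : ℝ := apolarNorm P1 with hAdef
    have hA : 0 ≤ A := Real.sqrt_nonneg _
    set m : ℕ := ⌈(A / K) ^ 2⌉₊ + 2 with hmdef
    obtain ⟨f, hf0, hfh, hfker⟩ := exists_harmonic hd c hc m (by omega)
    have heq := normSq_mul_eq c f hfker
    have hnorm : apolarNorm (P1 * f) = A * apolarNorm f := by
      rw [apolarNorm, heq, Real.sqrt_mul (apolarNormSq_nonneg _)]
      rfl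
    have hbd' := hbd m (by omega) f hfh
    rw [hnorm] at hbd'
    have hfpos : 0 < apolarNorm f := Real.sqrt_pos.mpr (apolarNormSq_pos hf0)
    have hKm : K * Real.sqrt m ≤ A := le_of_mul_le_mul_right hbd' hfpos
    have h1 : (A / K) ^ 2 < (m : ℝ) := by
      have h2 : ((A / K) ^ 2 : ℝ) ≤ (⌈(A / K) ^ 2⌉₊ : ℝ) := Nat.le_ceil _
      have h3 : (m : ℝ) = (⌈(A / K) ^ 2⌉₊ : ℝ) + 2 := by rw [hmdef]; push_cast; ring
      linarith
    have h3 : A / K < Real.sqrt m := (Real.lt_sqrt (by positivity)).mpr h1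
    have h4 : Real.sqrt m ≤ A / K := (le_div_iff₀ hK).mpr (by linarith [hKm])
    linarith
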